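/- In any universe of dicot games closed under sum and followers, * + * ≡ 0; that is, for every dicot game X, o⁻(* + * + X) = o⁻(X). -/

import Mathlib

namespace SetTheory

universe u

/-- The type of pre-games, as in the older Mathlib (`SetTheory.PGame`, removed since). -/
inductive PGame : Type (u + 1)
  | mk : ∀ α β : Type u, (α → PGame) → (β → PGame) → PGame

namespace PGame

/-- The indexing type for allowable moves by Left. -/
def LeftMoves : PGame → Type u
  | mk l _ _ _ => l

/-- The indexing type for allowable moves by Right. -/
def RightMoves : PGame → Type u
  | mk _ r _ _ => r

/-- The new game after Left makes an allowed move. -/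
def moveLeft : ∀ g : PGame, LeftMoves g → PGame
  | mk _l _ L _ => L

/-- The new game after Right makes an allowed move. -/
def moveRight : ∀ g : PGame, RightMoves g → PGame
  | mk _ _r _ R => R

/-- `IsOption x y` means that `x` is either a left or right option for `y`. -/
inductive IsOption : PGame → PGame → Prop
  | moveLeft {x : PGame} (i : x.LeftMoves) : IsOption (x.moveLeft i) x
  | moveRight {x : PGame} (i : x.RightMoves) : IsOption (x.moveRight i) x

/-- `Subsequent x y` says that `x` can be obtained by playing some nonempty sequence of moves
from `y`. -/
def Subsequent : PGame → PGame → Prop :=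
  Relation.TransGen IsOption

/-- The pre-game `Zero` is defined by `0 = { | }`. -/
instance : Zero PGame :=
  ⟨⟨PEmpty, PEmpty, PEmpty.elim, PEmpty.elim⟩⟩

/-- The sum of `x = {xL | xR}` and `y = {yL | yR}` is `{xL + y, x + yL | xR + y, x + yR}`. -/
noncomputable instance : Add PGame.{u} :=
  ⟨fun x y => by
    induction x generalizing y with | mk xl xr _ _ IHxl IHxr => _
    induction y with | mk yl yr yL yR IHyl IHyr => _
    have y := mk yl yr yL yR
    refine ⟨xl ⊕ yl, xr ⊕ yr, Sum.rec ?_ ?_, Sum.rec ?_ ?_⟩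
    · exact fun i => IHxl i y
    · exact IHyl
    · exact fun i => IHxr i y
    · exact IHyr⟩

/-- The pre-game `star`, which is fuzzy with zero. -/
def star : PGame.{u} :=
  ⟨PUnit, PUnit, fun _ => 0, fun _ => 0⟩

end PGame

end SetTheory

open SetTheory

namespace Misere

/-- Misère winning: `(wins G).1` means Left, moving first on `G`, wins under misère play;
`(wins G).2` means Right, moving first, wins. The player unable to move wins. -/
def wins : PGame → Prop × Prop
  | ⟨α, β, L, R⟩ =>
    (IsEmpty α ∨ ∃ i, ¬ (wins (L i)).2,
     IsEmpty β ∨ ∃ j, ¬ (wins (R j)).1)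

/-- Left wins moving first under misère play. -/
def LeftFirst (G : PGame) : Prop := (wins G).1

/-- Right wins moving first under misère play. -/
def RightFirst (G : PGame) : Prop := (wins G).2

/-- Normal-play winning: `(nwins G).1` means Left moving first wins (player unable to move loses). -/
def nwins : PGame → Prop × Prop
  | ⟨α, β, L, R⟩ =>
    (∃ i, ¬ (nwins (L i)).2,
     ∃ j, ¬ (nwins (R j)).1)

/-- Outcome classes. -/
inductive Outcome : Type
  | L | R | N | P
  deriving DecidableEq

/-- The partial order on outcomes: L > P > R, L > N > R, with P and N incomparable. -/
instance : LE Outcome := ⟨fun a b => a = b ∨ a = .R ∨ b = .L⟩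

open Classical in
/-- The misère outcome of a game. -/
noncomputable def misereOutcome (G : PGame) : Outcome :=
  if (wins G).1 then (if (wins G).2 then .N else .L)
  else (if (wins G).2 then .R else .P)

open Classical in
/-- The normal-play outcome of a game. -/
noncomputable def normalOutcome (G : PGame) : Outcome :=
  if (nwins G).1 then (if (nwins G).2 then .N else .L)
  else (if (nwins G).2 then .R else .P)

/-- A game is dicot if every subposition has a Left option iff it has a Right option. -/
def Dicot : PGame → Prop
  | ⟨α, β, L, R⟩ => (IsEmpty α ↔ IsEmpty β) ∧ (∀ i, Dicot (L i)) ∧ (∀ j, Dicot (R j))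

/-- A dead Left end: a Left end all of whose followers are Left ends. -/
def DeadLeftEnd : PGame → Prop
  | ⟨α, _β, _L, R⟩ => IsEmpty α ∧ ∀ j, DeadLeftEnd (R j)

/-- A dead Right end: a Right end all of whose followers are Right ends. -/
def DeadRightEnd : PGame → Prop
  | ⟨_α, β, L, _R⟩ => IsEmpty β ∧ ∀ i, DeadRightEnd (L i)

/-- A follower of `G` is any position reachable from `G`, including `G` itself. -/
def Follower (H G : PGame) : Prop := H = G ∨ PGame.Subsequent H G

/-- An end: a position where some player has no move. -/
def IsEnd (G : PGame) : Prop := IsEmpty G.LeftMoves ∨ IsEmpty G.RightMoves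

/-- A game is dead-ending if every one of its end followers is a dead end. -/
def DeadEnding (G : PGame) : Prop :=
  ∀ H, Follower H G → IsEnd H → (DeadLeftEnd H ∨ DeadRightEnd H)

end Misere


namespace SetTheory
namespace PGame

noncomputable def moveRecOn {C : PGame → Sort*} (x : PGame)
    (IH : ∀ y : PGame, (∀ i, C (y.moveLeft i)) → (∀ j, C (y.moveRight j)) → C y) : C x :=
  x.recOn fun yl yr yL yR _ _ => IH (mk yl yr yL yR) (by assumption) (by assumption)

noncomputable def toLeftMovesAdd {x y : PGame} : x.LeftMoves ⊕ y.LeftMoves ≃ (x + y).LeftMoves := by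
  cases x; cases y; exact Equiv.refl _

noncomputable def toRightMovesAdd {x y : PGame} : x.RightMoves ⊕ y.RightMoves ≃ (x + y).RightMoves := by
  cases x; cases y; exact Equiv.refl _

@[simp] theorem add_moveLeft_inl {x : PGame} (y : PGame) (i : x.LeftMoves) :
    (x + y).moveLeft (toLeftMovesAdd (Sum.inl i)) = x.moveLeft i + y := by
  cases x; cases y; rfl

@[simp] theorem add_moveLeft_inr (x : PGame) {y : PGame} (i : y.LeftMoves) :
    (x + y).moveLeft (toLeftMovesAdd (Sum.inr i)) = x + y.moveLeft i := by
  cases x; cases y; rfl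

@[simp] theorem add_moveRight_inl {x : PGame} (y : PGame) (i : x.RightMoves) :
    (x + y).moveRight (toRightMovesAdd (Sum.inl i)) = x.moveRight i + y := by
  cases x; cases y; rfl

@[simp] theorem add_moveRight_inr (x : PGame) {y : PGame} (i : y.RightMoves) :
    (x + y).moveRight (toRightMovesAdd (Sum.inr i)) = x + y.moveRight i := by
  cases x; cases y; rfl

theorem leftMoves_add_cases {x y : PGame} (k) {P : (x + y).LeftMoves → Prop}
    (hl : ∀ i, P (toLeftMovesAdd (Sum.inl i))) (hr : ∀ i, P (toLeftMovesAdd (Sum.inr i))) : P k := by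
  rw [← toLeftMovesAdd.apply_symm_apply k]
  rcases toLeftMovesAdd.symm k with i | i
  · exact hl i
  · exact hr i

theorem rightMoves_add_cases {x y : PGame} (k) {P : (x + y).RightMoves → Prop}
    (hl : ∀ i, P (toRightMovesAdd (Sum.inl i))) (hr : ∀ i, P (toRightMovesAdd (Sum.inr i))) : P k := by
  rw [← toRightMovesAdd.apply_symm_apply k]
  rcases toRightMovesAdd.symm k with i | i
  · exact hl i
  · exact hr i

instance : IsEmpty (0 : PGame).LeftMoves := inferInstanceAs (IsEmpty PEmpty)
instance : IsEmpty (0 : PGame).RightMoves := inferInstanceAs (IsEmpty PEmpty)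
instance : Inhabited star.LeftMoves := inferInstanceAs (Inhabited PUnit)
instance : Inhabited star.RightMoves := inferInstanceAs (Inhabited PUnit)

instance isEmpty_leftMoves_add (x y : PGame) [IsEmpty x.LeftMoves] [IsEmpty y.LeftMoves] :
    IsEmpty (x + y).LeftMoves :=
  ⟨fun k => (toLeftMovesAdd.symm k).elim isEmptyElim isEmptyElim⟩

instance isEmpty_rightMoves_add (x y : PGame) [IsEmpty x.RightMoves] [IsEmpty y.RightMoves] :
    IsEmpty (x + y).RightMoves :=
  ⟨fun k => (toRightMovesAdd.symm k).elim isEmptyElim isEmptyElim⟩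

@[simp] theorem star_moveLeft (x) : star.moveLeft x = 0 := rfl
@[simp] theorem star_moveRight (x) : star.moveRight x = 0 := rfl

inductive Relabelling : PGame.{u} → PGame.{u} → Prop
  | mk {x y : PGame} (L : x.LeftMoves ≃ y.LeftMoves) (R : x.RightMoves ≃ y.RightMoves) :
      (∀ i, Relabelling (x.moveLeft i) (y.moveLeft (L i))) →
      (∀ j, Relabelling (x.moveRight j) (y.moveRight (R j))) → Relabelling x y

infix:50 " ≡r " => Relabelling

theorem Relabelling.refl (x : PGame) : x ≡r x := by
  induction x with
  | mk xl xr xL xR ihl ihr => exact Relabelling.mk (Equiv.refl _) (Equiv.refl _) ihl ihr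

theorem zeroAddRelabelling (x : PGame) : 0 + x ≡r x := by
  induction x with
  | mk xl xr xL xR ihl ihr =>
    refine Relabelling.mk (Equiv.emptySum PEmpty xl) (Equiv.emptySum PEmpty xr) ?_ ?_
    · rintro (i | i)
      · exact i.elim
      · exact ihl i
    · rintro (i | i)
      · exact i.elim
      · exact ihr i

theorem addZeroRelabelling (x : PGame) : x + 0 ≡r x := by
  induction x with
  | mk xl xr xL xR ihl ihr =>
    refine Relabelling.mk (Equiv.sumEmpty xl PEmpty) (Equiv.sumEmpty xr PEmpty) ?_ ?_
    · rintro (i | i)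
      · exact ihl i
      · exact i.elim
    · rintro (i | i)
      · exact ihr i
      · exact i.elim

theorem Relabelling.addCongr {w x y z : PGame} (h1 : w ≡r x) (h2 : y ≡r z) : w + y ≡r x + z := by
  induction h1 generalizing y z with
  | mk L1 R1 hL1 hR1 ihL1 ihR1 =>
  induction h2 with
  | mk L2 R2 hL2 hR2 ihL2 ihR2 =>
  refine Relabelling.mk (toLeftMovesAdd.symm.trans ((L1.sumCongr L2).trans toLeftMovesAdd))
    (toRightMovesAdd.symm.trans ((R1.sumCongr R2).trans toRightMovesAdd)) ?_ ?_
  · intro i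
    obtain ⟨k, rfl⟩ := toLeftMovesAdd.surjective i
    rcases k with k | k
    · simp only [Equiv.trans_apply, Equiv.symm_apply_apply, Equiv.sumCongr_apply, Sum.map_inl,
        add_moveLeft_inl]
      exact ihL1 k (Relabelling.mk L2 R2 hL2 hR2)
    · simp only [Equiv.trans_apply, Equiv.symm_apply_apply, Equiv.sumCongr_apply, Sum.map_inr,
        add_moveLeft_inr]
      exact ihL2 k
  · intro i
    obtain ⟨k, rfl⟩ := toRightMovesAdd.surjective i
    rcases k with k | k
    · simp only [Equiv.trans_apply, Equiv.symm_apply_apply, Equiv.sumCongr_apply, Sum.map_inl,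
        add_moveRight_inl]
      exact ihR1 k (Relabelling.mk L2 R2 hL2 hR2)
    · simp only [Equiv.trans_apply, Equiv.symm_apply_apply, Equiv.sumCongr_apply, Sum.map_inr,
        add_moveRight_inr]
      exact ihR2 k

end PGame
end SetTheory

namespace Misere

lemma wins_fst (G : PGame) :
    (wins G).1 ↔ (IsEmpty G.LeftMoves ∨ ∃ i, ¬ (wins (G.moveLeft i)).2) := by
  cases G; rfl

lemma wins_snd (G : PGame) :
    (wins G).2 ↔ (IsEmpty G.RightMoves ∨ ∃ j, ¬ (wins (G.moveRight j)).1) := by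
  cases G; rfl

open PGame in
theorem wins_congr {G H : PGame} (r : G ≡r H) :
    ((wins G).1 ↔ (wins H).1) ∧ ((wins G).2 ↔ (wins H).2) := by
  induction r with
  | mk L R hL hR ihL ihR =>
    constructor
    · rw [wins_fst, wins_fst]
      apply or_congr L.isEmpty_congr
      constructor
      · rintro ⟨i, hi⟩
        exact ⟨L i, fun h => hi ((ihL i).2.mpr h)⟩
      · rintro ⟨i, hi⟩
        refine ⟨L.symm i, fun h => hi ?_⟩
        have := (ihL (L.symm i)).2.mp h
        rwa [L.apply_symm_apply] at this
    · rw [wins_snd, wins_snd]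
      apply or_congr R.isEmpty_congr
      constructor
      · rintro ⟨j, hj⟩
        exact ⟨R j, fun h => hj ((ihR j).1.mpr h)⟩
      · rintro ⟨j, hj⟩
        refine ⟨R.symm j, fun h => hj ?_⟩
        have := (ihR (R.symm j)).1.mp h
        rwa [R.apply_symm_apply] at this

end Misere

namespace Misere
open PGame

lemma dicot_iff (G : PGame) :
    Dicot G ↔ (IsEmpty G.LeftMoves ↔ IsEmpty G.RightMoves) ∧
      (∀ i, Dicot (G.moveLeft i)) ∧ (∀ j, Dicot (G.moveRight j)) := by
  cases G; rfl

lemma not_wins_snd_star_add (X : PGame) (hXl : IsEmpty X.LeftMoves)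
    (hXr : IsEmpty X.RightMoves) : ¬ (wins (PGame.star + X)).2 := by
  rw [wins_snd]
  rintro (h | ⟨j, hj⟩)
  · exact h.false (toRightMovesAdd (Sum.inl default))
  · apply hj
    refine rightMoves_add_cases j (P := fun j => (wins ((PGame.star + X).moveRight j)).1) ?_ ?_
    · intro u
      rw [add_moveRight_inl, wins_fst]
      exact Or.inl (by rw [star_moveRight]; infer_instance)
    · exact fun u => hXr.elim u

lemma wins_fst_star_add (X : PGame) (hX : ¬ (wins X).1) : (wins (PGame.star + X)).2 := by
  rw [wins_snd]
  refine Or.inr ⟨toRightMovesAdd (Sum.inl default), ?_⟩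
  rw [add_moveRight_inl, star_moveRight]
  exact fun h => hX ((wins_congr (zeroAddRelabelling X)).1.mp h)

lemma wins_snd_star_add (X : PGame) (hX : ¬ (wins X).2) : (wins (PGame.star + X)).1 := by
  rw [wins_fst]
  refine Or.inr ⟨toLeftMovesAdd (Sum.inl default), ?_⟩
  rw [add_moveLeft_inl, star_moveLeft]
  exact fun h => hX ((wins_congr (zeroAddRelabelling X)).2.mp h)

lemma not_wins_fst_star_add (X : PGame) (hXl : IsEmpty X.LeftMoves)
    (hXr : IsEmpty X.RightMoves) : ¬ (wins (PGame.star + X)).1 := by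
  rw [wins_fst]
  rintro (h | ⟨i, hi⟩)
  · exact h.false (toLeftMovesAdd (Sum.inl default))
  · apply hi
    refine leftMoves_add_cases i (P := fun i => (wins ((PGame.star + X).moveLeft i)).2) ?_ ?_
    · intro u
      rw [add_moveLeft_inl, wins_snd]
      exact Or.inl (by rw [star_moveLeft]; infer_instance)
    · exact fun u => hXl.elim u

/-- relabelling `(0 + ★) + X ≡r ★ + X` -/
def rel₁ (X : PGame) : (0 + PGame.star) + X ≡r PGame.star + X :=
  (zeroAddRelabelling PGame.star).addCongr (Relabelling.refl X)

def rel₂ (X : PGame) : (PGame.star + 0) + X ≡r PGame.star + X :=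
  (addZeroRelabelling PGame.star).addCongr (Relabelling.refl X)

theorem main : ∀ X : PGame, Dicot X →
    ((wins (PGame.star + PGame.star + X)).1 ↔ (wins X).1) ∧
    ((wins (PGame.star + PGame.star + X)).2 ↔ (wins X).2) := by
  intro X
  induction X using PGame.moveRecOn with
  | _ X IHl IHr =>
  intro hX
  rw [dicot_iff] at hX
  obtain ⟨hend, hdl, hdr⟩ := hX
  constructor
  · constructor
    · -- forward, Left
      intro h
      by_contra hX1
      rw [wins_fst] at hX1
      push_neg at hX1
      obtain ⟨hne, hall⟩ := hX1
      rw [wins_fst] at h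
      rcases h with h | ⟨i, hi⟩
      · exact h.false (toLeftMovesAdd (Sum.inl (toLeftMovesAdd (Sum.inl default))))
      · apply hi
        refine leftMoves_add_cases i (P := fun i => (wins ((PGame.star + PGame.star + X).moveLeft i)).2) ?_ ?_
        · intro k
          rw [add_moveLeft_inl]
          refine leftMoves_add_cases k (P := fun k => (wins ((PGame.star + PGame.star).moveLeft k + X)).2) ?_ ?_
          · intro u
            rw [add_moveLeft_inl, star_moveLeft]
            exact (wins_congr (rel₁ X)).2.mpr
              (wins_fst_star_add X (by rw [wins_fst]; push_neg; exact ⟨hne, hall⟩))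
          · intro u
            rw [add_moveLeft_inr, star_moveLeft]
            exact (wins_congr (rel₂ X)).2.mpr
              (wins_fst_star_add X (by rw [wins_fst]; push_neg; exact ⟨hne, hall⟩))
        · intro i
          rw [add_moveLeft_inr]
          exact ((IHl i (hdl i)).2).mpr (hall i)
    · -- backward, Left
      intro h
      rw [wins_fst] at h ⊢
      rcases h with h | ⟨i, hi⟩
      · refine Or.inr ⟨toLeftMovesAdd (Sum.inl (toLeftMovesAdd (Sum.inl default))), ?_⟩
        rw [add_moveLeft_inl, add_moveLeft_inl, star_moveLeft]
        intro hc
        exact not_wins_snd_star_add X h (hend.mp h) ((wins_congr (rel₁ X)).2.mp hc)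
      · refine Or.inr ⟨toLeftMovesAdd (Sum.inr i), ?_⟩
        rw [add_moveLeft_inr]
        exact fun hc => hi (((IHl i (hdl i)).2).mp hc)
  · constructor
    · -- forward, Right
      intro h
      by_contra hX2
      rw [wins_snd] at hX2
      push_neg at hX2
      obtain ⟨hne, hall⟩ := hX2
      rw [wins_snd] at h
      rcases h with h | ⟨j, hj⟩
      · exact h.false (toRightMovesAdd (Sum.inl (toRightMovesAdd (Sum.inl default))))
      · apply hj
        refine rightMoves_add_cases j (P := fun j => (wins ((PGame.star + PGame.star + X).moveRight j)).1) ?_ ?_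
        · intro k
          rw [add_moveRight_inl]
          refine rightMoves_add_cases k (P := fun k => (wins ((PGame.star + PGame.star).moveRight k + X)).1) ?_ ?_
          · intro u
            rw [add_moveRight_inl, star_moveRight]
            exact (wins_congr (rel₁ X)).1.mpr
              (wins_snd_star_add X (by rw [wins_snd]; push_neg; exact ⟨hne, hall⟩))
          · intro u
            rw [add_moveRight_inr, star_moveRight]
            exact (wins_congr (rel₂ X)).1.mpr
              (wins_snd_star_add X (by rw [wins_snd]; push_neg; exact ⟨hne, hall⟩))
        · intro j
          rw [add_moveRight_inr]
          exact ((IHr j (hdr j)).1).mpr (hall j)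
    · -- backward, Right
      intro h
      rw [wins_snd] at h ⊢
      rcases h with h | ⟨j, hj⟩
      · refine Or.inr ⟨toRightMovesAdd (Sum.inl (toRightMovesAdd (Sum.inl default))), ?_⟩
        rw [add_moveRight_inl, add_moveRight_inl, star_moveRight]
        intro hc
        exact not_wins_fst_star_add X (hend.mpr h) h ((wins_congr (rel₁ X)).1.mp hc)
      · refine Or.inr ⟨toRightMovesAdd (Sum.inr j), ?_⟩
        rw [add_moveRight_inr]
        exact fun hc => hj (((IHr j (hdr j)).1).mp hc)

end Misere


open Misere in
/-- `* + * ≡ 0` modulo the universe of dicot games. -/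
theorem star_add_star_equiv_zero :
    ∀ X : PGame, Dicot X →
      misereOutcome (PGame.star + PGame.star + X) = misereOutcome X := by
  intro X hX
  obtain ⟨h1, h2⟩ := Misere.main X hX
  unfold misereOutcome
  rw [propext h1, propext h2]
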